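/- arXiv:0711.4206 — 7 statements merged into one kernel-verified Lean document; each statement's English description precedes it below -/
import Mathlib

section
/- For every s ∈ ℝ one has the first integral q(s)² = u(s)² − 2·v(s). -/
open Filter MeasureTheory Set

/-- For the Tracy–Widom system `q' = p - u q`, `p' = x q - 2 v q + u p`,
`u' = -q²`, `v' = -p q` with vanishing boundary conditions at `+∞`, for every `s ∈ ℝ`
one has the first integral `q(s)² = u(s)² - 2 v(s)`. -/
theorem stmt1 (q p u v : ℝ → ℝ)
    (hq : ∀ x : ℝ, HasDerivAt q (p x - u x * q x) x)
    (hp : ∀ x : ℝ, HasDerivAt p (x * q x - 2 * v x * q x + u x * p x) x)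
    (hu : ∀ x : ℝ, HasDerivAt u (-(q x) ^ 2) x)
    (hv : ∀ x : ℝ, HasDerivAt v (-(p x * q x)) x)
    (hq0 : Tendsto q atTop (nhds 0))
    (hpq0 : Tendsto (fun x => p x * q x) atTop (nhds 0))
    (hu0 : Tendsto u atTop (nhds 0))
    (hv0 : Tendsto v atTop (nhds 0)) :
    ∀ s : ℝ, (q s) ^ 2 = (u s) ^ 2 - 2 * v s := by
  set F : ℝ → ℝ := fun x => q x ^ 2 - u x ^ 2 + 2 * v x with hF
  have hF' : ∀ x : ℝ, HasDerivAt F 0 x := by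
    intro x
    have h : HasDerivAt F (2 * q x * (p x - u x * q x) - 2 * u x * (-(q x) ^ 2)
        + 2 * (-(p x * q x))) x := by
      have h0 := (((hq x).pow 2).sub ((hu x).pow 2)).add ((hv x).const_mul 2)
      have e : (q ^ 2 - u ^ 2 + fun y => 2 * v y) = F := by rw [hF]; funext y; simp
      rw [e] at h0
      exact h0.congr_deriv (by rw [show (2:ℕ) - 1 = 1 from rfl]; push_cast; ring)
    convert h using 1
    ring
  have hconst : ∀ s y : ℝ, F s = F y := by
    intro s y
    have := is_const_of_deriv_eq_zero (f := F)
      (fun x => (hF' x).differentiableAt) (fun x => (hF' x).deriv) s y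
    exact this
  intro s
  have h1 : Tendsto F atTop (nhds (F s)) := by
    have : F = fun _ => F s := funext fun y => (hconst s y).symm
    rw [this]; exact tendsto_const_nhds
  have h2 : Tendsto F atTop (nhds 0) := by
    have : Tendsto (fun x => q x ^ 2 - u x ^ 2 + 2 * v x) atTop
        (nhds (0 ^ 2 - 0 ^ 2 + 2 * 0)) :=
      ((hq0.pow 2).sub (hu0.pow 2)).add (hv0.const_mul 2)
    simpa using this
  have : F s = 0 := tendsto_nhds_unique h1 h2
  have : q s ^ 2 - u s ^ 2 + 2 * v s = 0 := this
  linarith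
end

section
/- Fix s ∈ ℝ. Assume in addition that x ↦ (x−s)·(x·q(x)² − 4·q(x)²·v(x) + 3·q(x)²·u(x)² − 2·p(x)q(x)u(x) + p(x)²) and x ↦ p(x)q(x) − u(x)q(x)² are Lebesgue integrable on (s, ∞), and that (x−s)·(p(x)q(x) − u(x)q(x)²) → 0 as x → +∞. Then ∫_s^∞ (x−s)·(x·q(x)² − 4·q(x)²·v(x) + 3·q(x)²·u(x)² − 2·p(x)q(x)u(x) + p(x)²) dx = (1/2)·u(s)² − v(s). -/
open Filter MeasureTheory Set

/-- For the Tracy–Widom system and fixed `s`, assuming integrability on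
`(s,∞)` of `(x-s)·(x q² - 4 q² v + 3 q² u² - 2 p q u + p²)` and of `p q - u q²`, and
`(x-s)·(p q - u q²) → 0` at `+∞`, one has
`∫_s^∞ (x-s)·(x q² - 4 q² v + 3 q² u² - 2 p q u + p²) dx = (1/2) u(s)² - v(s)`. -/
theorem stmt3 (q p u v : ℝ → ℝ)
    (hq : ∀ x : ℝ, HasDerivAt q (p x - u x * q x) x)
    (hp : ∀ x : ℝ, HasDerivAt p (x * q x - 2 * v x * q x + u x * p x) x)
    (hu : ∀ x : ℝ, HasDerivAt u (-(q x) ^ 2) x)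
    (hv : ∀ x : ℝ, HasDerivAt v (-(p x * q x)) x)
    (hq0 : Tendsto q atTop (nhds 0))
    (hpq0 : Tendsto (fun x => p x * q x) atTop (nhds 0))
    (hu0 : Tendsto u atTop (nhds 0))
    (hv0 : Tendsto v atTop (nhds 0))
    (s : ℝ)
    (hint1 : IntegrableOn
      (fun x => (x - s) * (x * (q x) ^ 2 - 4 * (q x) ^ 2 * v x
        + 3 * (q x) ^ 2 * (u x) ^ 2 - 2 * p x * q x * u x + (p x) ^ 2)) (Ioi s))
    (hint2 : IntegrableOn (fun x => p x * q x - u x * (q x) ^ 2) (Ioi s))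
    (hlim : Tendsto (fun x => (x - s) * (p x * q x - u x * (q x) ^ 2))
      atTop (nhds 0)) :
    (∫ x in Ioi s, (x - s) * (x * (q x) ^ 2 - 4 * (q x) ^ 2 * v x
        + 3 * (q x) ^ 2 * (u x) ^ 2 - 2 * p x * q x * u x + (p x) ^ 2))
      = (1 / 2) * (u s) ^ 2 - v s := by
  set f : ℝ → ℝ := fun x => (x - s) * (x * (q x) ^ 2 - 4 * (q x) ^ 2 * v x
        + 3 * (q x) ^ 2 * (u x) ^ 2 - 2 * p x * q x * u x + (p x) ^ 2) with hf
  set g : ℝ → ℝ := fun x => p x * q x - u x * (q x) ^ 2 with hg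
  -- the first integral identity: q² = u² - 2v
  have hw : ∀ x : ℝ, HasDerivAt (fun x => q x ^ 2 - u x ^ 2 + 2 * v x) 0 x := by
    intro x
    have := (((hq x).fun_pow 2).fun_sub ((hu x).fun_pow 2)).fun_add ((hv x).const_mul 2)
    exact this.congr_deriv (by ring)
  have hwconst : ∀ x y : ℝ, q x ^ 2 - u x ^ 2 + 2 * v x = q y ^ 2 - u y ^ 2 + 2 * v y := by
    have hdiff : Differentiable ℝ (fun x => q x ^ 2 - u x ^ 2 + 2 * v x) :=
      fun x => (hw x).differentiableAt
    have hder : ∀ x, deriv (fun x => q x ^ 2 - u x ^ 2 + 2 * v x) x = 0 :=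
      fun x => (hw x).deriv
    exact fun x y => is_const_of_deriv_eq_zero hdiff hder x y
  have hkey : ∀ x : ℝ, q x ^ 2 = u x ^ 2 - 2 * v x := by
    intro x
    have h1 : Tendsto (fun y => q y ^ 2 - u y ^ 2 + 2 * v y) atTop
        (nhds (q x ^ 2 - u x ^ 2 + 2 * v x)) := by
      have : (fun y => q y ^ 2 - u y ^ 2 + 2 * v y)
          = fun _ => q x ^ 2 - u x ^ 2 + 2 * v x := funext fun y => hwconst y x
      rw [this]; exact tendsto_const_nhds
    have h2 : Tendsto (fun y => q y ^ 2 - u y ^ 2 + 2 * v y) atTop (nhds 0) := by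
      have := ((hq0.pow 2).sub (hu0.pow 2)).add (hv0.const_mul 2)
      simpa using this
    have := tendsto_nhds_unique h1 h2
    linarith
  -- G x = (x-s) * g x, with derivative f + g
  have hG : ∀ x : ℝ, HasDerivAt (fun x => (x - s) * (p x * q x - u x * (q x) ^ 2))
      (f x + g x) x := by
    intro x
    have := (((hasDerivAt_id x).sub_const s).fun_mul
      (((hp x).fun_mul (hq x)).fun_sub ((hu x).fun_mul ((hq x).fun_pow 2))))
    refine this.congr_deriv ?_
    have hk := hkey x
    simp only [hf, hg, id_eq]
    linear_combination ((x - s) * q x ^ 2) * hk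
  have hGint := integral_Ioi_of_hasDerivAt_of_tendsto
    (hG s).continuousAt.continuousWithinAt (fun x _ => hG x) (hint1.add hint2) hlim
  have hGs : ∫ x in Ioi s, (f x + g x) = 0 := by
    simp at hGint; simpa using hGint
  -- H x = v x - u x ^2 / 2, derivative -g
  have hH : ∀ x : ℝ, HasDerivAt (fun x => v x - u x ^ 2 / 2) (-(g x)) x := by
    intro x
    have := (hv x).fun_sub (((hu x).fun_pow 2).div_const 2)
    refine this.congr_deriv ?_
    simp only [hg]
    ring
  have hHtend : Tendsto (fun x => v x - u x ^ 2 / 2) atTop (nhds 0) := by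
    have := hv0.sub ((hu0.pow 2).div_const 2)
    simpa using this
  have hHint := integral_Ioi_of_hasDerivAt_of_tendsto
    (hH s).continuousAt.continuousWithinAt (fun x _ => hH x) hint2.neg hHtend
  have hgint : ∫ x in Ioi s, g x = v s - u s ^ 2 / 2 := by
    rw [integral_neg] at hHint
    linarith
  have hsum : ∫ x in Ioi s, (f x + g x) = (∫ x in Ioi s, f x) + ∫ x in Ioi s, g x :=
    integral_add hint1 hint2
  have : (∫ x in Ioi s, f x) = -(v s - u s ^ 2 / 2) := by
    rw [hGs] at hsum
    linarith [hsum, hgint]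
  calc (∫ x in Ioi s, (x - s) * (x * (q x) ^ 2 - 4 * (q x) ^ 2 * v x
        + 3 * (q x) ^ 2 * (u x) ^ 2 - 2 * p x * q x * u x + (p x) ^ 2))
      = ∫ x in Ioi s, f x := rfl
    _ = (1 / 2) * (u s) ^ 2 - v s := by rw [this]; ring
end

section
/- Fix s ∈ ℝ and define q₁(x) := x·q(x) − v(x)q(x) + u(x)p(x). Assume in addition that x ↦ (x−s)·q(x)·(p(x) − u(x)q(x)), x ↦ q(x)², x ↦ (x−s)·(q(x)q₁(x) − 3·q(x)²v(x) + 3·q(x)²u(x)² − 3·p(x)q(x)u(x) + p(x)²) and x ↦ p(x)q(x) − u(x)q(x)² are Lebesgue integrable on (s, ∞), and that (x−s)·q(x)² → 0 and (x−s)·(p(x)q(x) − u(x)q(x)²) → 0 as x → +∞. Then, for every real constant c, setting a(x) := 2c·(p(x)q(x) − u(x)q(x)²), one has 10·(∫_s^∞ (x−s)·a(x) dx)² − 20·c²·∫_s^∞ (x−s)·(q(x)q₁(x) − 3·q(x)²v(x) + 3·q(x)²u(x)² − 3·p(x)q(x)u(x) + p(x)²) dx = 20·c²·v(s). -/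
open Filter MeasureTheory Set

/-- For the Tracy–Widom system and fixed `s`, with
`q₁(x) = x q(x) - v(x) q(x) + u(x) p(x)`, assuming the stated integrability and
decay hypotheses, for every constant `c`, with `a = 2c (p q - u q²)`, one has
`10 (∫_s^∞ (x-s) a)² - 20 c² ∫_s^∞ (x-s)(q q₁ - 3 q² v + 3 q² u² - 3 p q u + p²)
  = 20 c² v(s)`. -/
theorem stmt4 (q p u v : ℝ → ℝ)
    (hq : ∀ x : ℝ, HasDerivAt q (p x - u x * q x) x)
    (hp : ∀ x : ℝ, HasDerivAt p (x * q x - 2 * v x * q x + u x * p x) x)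
    (hu : ∀ x : ℝ, HasDerivAt u (-(q x) ^ 2) x)
    (hv : ∀ x : ℝ, HasDerivAt v (-(p x * q x)) x)
    (hq0 : Tendsto q atTop (nhds 0))
    (hpq0 : Tendsto (fun x => p x * q x) atTop (nhds 0))
    (hu0 : Tendsto u atTop (nhds 0))
    (hv0 : Tendsto v atTop (nhds 0))
    (s : ℝ)
    (q₁ : ℝ → ℝ)
    (hq₁ : ∀ x : ℝ, q₁ x = x * q x - v x * q x + u x * p x)
    (hint1 : IntegrableOn (fun x => (x - s) * (q x * (p x - u x * q x))) (Ioi s))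
    (hint2 : IntegrableOn (fun x => (q x) ^ 2) (Ioi s))
    (hint3 : IntegrableOn
      (fun x => (x - s) * (q x * q₁ x - 3 * (q x) ^ 2 * v x
        + 3 * (q x) ^ 2 * (u x) ^ 2 - 3 * p x * q x * u x + (p x) ^ 2)) (Ioi s))
    (hint4 : IntegrableOn (fun x => p x * q x - u x * (q x) ^ 2) (Ioi s))
    (hlim1 : Tendsto (fun x => (x - s) * (q x) ^ 2) atTop (nhds 0))
    (hlim2 : Tendsto (fun x => (x - s) * (p x * q x - u x * (q x) ^ 2))
      atTop (nhds 0)) :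
    ∀ c : ℝ,
      10 * (∫ x in Ioi s, (x - s) * (2 * c * (p x * q x - u x * (q x) ^ 2))) ^ 2
        - 20 * c ^ 2 * ∫ x in Ioi s, (x - s) * (q x * q₁ x - 3 * (q x) ^ 2 * v x
            + 3 * (q x) ^ 2 * (u x) ^ 2 - 3 * p x * q x * u x + (p x) ^ 2)
      = 20 * c ^ 2 * v s := by
  -- derivative of q^2 and u^2
  have hq2d : ∀ x : ℝ, HasDerivAt (fun y => q y ^ 2) (2 * q x * (p x - u x * q x)) x :=
    fun x => by simpa using (hq x).fun_pow 2
  have hu2d : ∀ x : ℝ, HasDerivAt (fun y => u y ^ 2) (2 * u x * (-(q x) ^ 2)) x :=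
    fun x => by simpa using (hu x).fun_pow 2
  -- first integral identity: u^2 - 2v = q^2
  have hA : ∀ x : ℝ, u x ^ 2 - 2 * v x = q x ^ 2 := by
    have hF : ∀ x : ℝ, HasDerivAt (fun y => u y ^ 2 - 2 * v y - q y ^ 2) 0 x := by
      intro x
      have hd := ((hu2d x).fun_sub ((hv x).const_mul 2)).fun_sub (hq2d x)
      convert! hd using 1; ring
    have hconst : ∀ x y : ℝ, (fun y => u y ^ 2 - 2 * v y - q y ^ 2) x
        = (fun y => u y ^ 2 - 2 * v y - q y ^ 2) y :=
      fun x y => is_const_of_deriv_eq_zero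
        (fun z => (hF z).differentiableAt) (fun z => (hF z).deriv) x y
    have ht : Tendsto (fun y => u y ^ 2 - 2 * v y - q y ^ 2) atTop (nhds 0) := by
      have := ((hu0.pow 2).sub (hv0.const_mul 2)).sub (hq0.pow 2)
      simpa using this
    have ht2 : Tendsto (fun y => u y ^ 2 - 2 * v y - q y ^ 2) atTop
        (nhds (u 0 ^ 2 - 2 * v 0 - q 0 ^ 2)) := by
      have : (fun y => u y ^ 2 - 2 * v y - q y ^ 2)
          = fun _ => u 0 ^ 2 - 2 * v 0 - q 0 ^ 2 := funext fun x => hconst x 0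
      rw [this]; exact tendsto_const_nhds
    have h0 : u 0 ^ 2 - 2 * v 0 - q 0 ^ 2 = 0 := tendsto_nhds_unique ht2 ht
    intro x
    have := hconst x 0
    simp only at this
    linarith
  -- ∫ q^2 = u s
  have hq2int : ∫ x in Ioi s, q x ^ 2 = u s := by
    have hd : ∀ x ∈ Ici s, HasDerivAt (fun y => -u y) (q x ^ 2) x :=
      fun x _ => by simpa using (hu x).fun_neg
    have ht : Tendsto (fun y => -u y) atTop (nhds 0) := by simpa using hu0.neg
    have := integral_Ioi_of_hasDerivAt_of_tendsto' hd hint2 ht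
    simpa using this
  -- ∫ (x-s) q q' = - u s / 2
  have I1 : ∫ x in Ioi s, (x - s) * (q x * (p x - u x * q x)) = -(u s) / 2 := by
    have hd : ∀ x ∈ Ici s, HasDerivAt (fun y => (y - s) * q y ^ 2 / 2)
        (q x ^ 2 / 2 + (x - s) * (q x * (p x - u x * q x))) x := by
      intro x _
      have hd0 := (((hasDerivAt_id x).sub_const s).fun_mul (hq2d x)).div_const 2
      convert! hd0 using 1; simp only [id_eq]; ring
    have ht : Tendsto (fun y => (y - s) * q y ^ 2 / 2) atTop (nhds 0) := by
      simpa using hlim1.div_const 2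
    have hi : IntegrableOn (fun x => q x ^ 2 / 2
        + (x - s) * (q x * (p x - u x * q x))) (Ioi s) :=
      (hint2.div_const 2).add hint1
    have h := integral_Ioi_of_hasDerivAt_of_tendsto' hd hi ht
    rw [integral_add (hint2.div_const 2) hint1, integral_div, hq2int] at h
    simp only [sub_self, zero_mul, zero_div, zero_sub, zero_sub] at h
    linarith
  -- ∫ (pq - u q^2) = v s - u s ^2 / 2
  have J4 : ∫ x in Ioi s, (p x * q x - u x * (q x) ^ 2) = v s - u s ^ 2 / 2 := by
    have hd : ∀ x ∈ Ici s, HasDerivAt (fun y => u y ^ 2 / 2 - v y)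
        (p x * q x - u x * (q x) ^ 2) x := by
      intro x _
      have hd0 := ((hu2d x).div_const 2).fun_sub (hv x)
      convert! hd0 using 1; ring
    have ht : Tendsto (fun y => u y ^ 2 / 2 - v y) atTop (nhds 0) := by
      have := ((hu0.pow 2).div_const 2).sub hv0
      simpa using this
    have h := integral_Ioi_of_hasDerivAt_of_tendsto' hd hint4 ht
    rw [h]; ring
  -- ∫ (x-s) * big = u s^2/2 - v s
  have I3 : ∫ x in Ioi s, (x - s) * (q x * q₁ x - 3 * (q x) ^ 2 * v x
      + 3 * (q x) ^ 2 * (u x) ^ 2 - 3 * p x * q x * u x + (p x) ^ 2)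
      = u s ^ 2 / 2 - v s := by
    have hd : ∀ x ∈ Ici s, HasDerivAt (fun y => (y - s) * (p y * q y - u y * (q y) ^ 2))
        ((p x * q x - u x * (q x) ^ 2) + (x - s) * (q x * q₁ x - 3 * (q x) ^ 2 * v x
          + 3 * (q x) ^ 2 * (u x) ^ 2 - 3 * p x * q x * u x + (p x) ^ 2)) x := by
      intro x _
      have hd0 := ((hasDerivAt_id x).sub_const s).fun_mul
        (((hp x).fun_mul (hq x)).fun_sub ((hu x).fun_mul (hq2d x)))
      convert! hd0 using 1
      rw [hq₁ x]
      simp only [id_eq]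
      linear_combination (x - s) * q x ^ 2 * (hA x)
    have hi : IntegrableOn (fun x => (p x * q x - u x * (q x) ^ 2)
        + (x - s) * (q x * q₁ x - 3 * (q x) ^ 2 * v x
          + 3 * (q x) ^ 2 * (u x) ^ 2 - 3 * p x * q x * u x + (p x) ^ 2)) (Ioi s) :=
      hint4.add hint3
    have h := integral_Ioi_of_hasDerivAt_of_tendsto' hd hi hlim2
    rw [integral_add hint4 hint3, J4] at h
    simp only [sub_self, zero_mul, zero_sub] at h
    linarith
  intro c
  have heq : ∀ x : ℝ, (x - s) * (2 * c * (p x * q x - u x * (q x) ^ 2))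
      = (2 * c) * ((x - s) * (q x * (p x - u x * q x))) := fun x => by ring
  simp_rw [heq]
  rw [integral_const_mul, I1, I3]
  ring
end

section
/- Fix s ∈ ℝ and define q₁(x) := x·q(x) − v(x)q(x) + u(x)p(x). Assume in addition that x ↦ p(x)q(x) and x ↦ (x−s)·(−3·q(x)q₁(x) + 3·q(x)²v(x) − 3·p(x)² + 3·u(x)p(x)q(x)) are Lebesgue integrable on (s, ∞), and that (x−s)·p(x)q(x) → 0 as x → +∞. Then ∫_s^∞ (x−s)·(−3·q(x)q₁(x) + 3·q(x)²v(x) − 3·p(x)² + 3·u(x)p(x)q(x)) dx = 3·v(s). -/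
open Filter MeasureTheory Set

/-- For the Tracy–Widom system and fixed `s`, with
`q₁(x) = x q(x) - v(x) q(x) + u(x) p(x)`, assuming integrability on `(s,∞)` of
`p q` and of `(x-s)·(-3 q q₁ + 3 q² v - 3 p² + 3 u p q)`, and `(x-s)·p q → 0` at
`+∞`, one has `∫_s^∞ (x-s)·(-3 q q₁ + 3 q² v - 3 p² + 3 u p q) dx = 3 v(s)`. -/
theorem stmt5 (q p u v : ℝ → ℝ)
    (hq : ∀ x : ℝ, HasDerivAt q (p x - u x * q x) x)
    (hp : ∀ x : ℝ, HasDerivAt p (x * q x - 2 * v x * q x + u x * p x) x)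
    (hu : ∀ x : ℝ, HasDerivAt u (-(q x) ^ 2) x)
    (hv : ∀ x : ℝ, HasDerivAt v (-(p x * q x)) x)
    (hq0 : Tendsto q atTop (nhds 0))
    (hpq0 : Tendsto (fun x => p x * q x) atTop (nhds 0))
    (hu0 : Tendsto u atTop (nhds 0))
    (hv0 : Tendsto v atTop (nhds 0))
    (s : ℝ)
    (q₁ : ℝ → ℝ)
    (hq₁ : ∀ x : ℝ, q₁ x = x * q x - v x * q x + u x * p x)
    (hint1 : IntegrableOn (fun x => p x * q x) (Ioi s))
    (hint2 : IntegrableOn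
      (fun x => (x - s) * (-3 * q x * q₁ x + 3 * (q x) ^ 2 * v x
        - 3 * (p x) ^ 2 + 3 * u x * p x * q x)) (Ioi s))
    (hlim : Tendsto (fun x => (x - s) * (p x * q x)) atTop (nhds 0)) :
    (∫ x in Ioi s, (x - s) * (-3 * q x * q₁ x + 3 * (q x) ^ 2 * v x
        - 3 * (p x) ^ 2 + 3 * u x * p x * q x)) = 3 * v s := by
  set F : ℝ → ℝ := fun x => (x - s) * (-3 * (p x * q x)) - 3 * v x with hF
  have hFderiv : ∀ x : ℝ, HasDerivAt F
      ((x - s) * (-3 * q x * q₁ x + 3 * (q x) ^ 2 * v x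
        - 3 * (p x) ^ 2 + 3 * u x * p x * q x)) x := by
    intro x
    have h1 : HasDerivAt (fun x : ℝ => (x - s) * (-3 * (p x * q x)))
        (1 * (-3 * (p x * q x)) + (x - s) *
          (-3 * ((x * q x - 2 * v x * q x + u x * p x) * q x
            + p x * (p x - u x * q x)))) x := by
      exact ((hasDerivAt_id x).sub_const s).mul (((hp x).mul (hq x)).const_mul (-3))
    have h2 := h1.sub ((hv x).const_mul 3)
    exact h2.congr_deriv (by rw [hq₁ x]; ring)
  have hFlim : Tendsto F atTop (nhds 0) := by
    have h := (hlim.const_mul (-3)).sub (hv0.const_mul 3)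
    have hFe : F = fun x => -3 * ((x - s) * (p x * q x)) - 3 * v x := by
      funext x; simp only [hF]; ring
    rw [hFe]
    simpa using h
  have := integral_Ioi_of_hasDerivAt_of_tendsto
    (f := F) (a := s)
    ((hFderiv s).continuousAt.continuousWithinAt)
    (fun x _ => hFderiv x) hint2 hFlim
  rw [this]
  simp [hF]
end

section
/- Let u₁, w : ℝ → ℝ be differentiable functions satisfying, for all real x, u₁'(x) = −q(x)·(x·q(x) − v(x)q(x) + u(x)p(x)) and w'(x) = −p(x)², with u₁(x) → 0 and w(x) → 0 as x → +∞. Then for every s ∈ ℝ one has the first integral u₁(s) − u(s)·v(s) + w(s) = −p(s)·q(s) (equivalently, u₁(s) − u(s)v(s) + w(s) = v'(s)). -/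
open Filter MeasureTheory Set

/-- For the Tracy–Widom system, let `u₁, w : ℝ → ℝ` be differentiable with
`u₁'(x) = -q(x)·(x q(x) - v(x) q(x) + u(x) p(x))` and `w'(x) = -p(x)²`, with
`u₁ → 0` and `w → 0` at `+∞`. Then for every `s`,
`u₁(s) - u(s) v(s) + w(s) = -p(s) q(s)` (equivalently `= v'(s)`). -/
theorem stmt6 (q p u v u₁ w : ℝ → ℝ)
    (hq : ∀ x : ℝ, HasDerivAt q (p x - u x * q x) x)
    (hp : ∀ x : ℝ, HasDerivAt p (x * q x - 2 * v x * q x + u x * p x) x)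
    (hu : ∀ x : ℝ, HasDerivAt u (-(q x) ^ 2) x)
    (hv : ∀ x : ℝ, HasDerivAt v (-(p x * q x)) x)
    (hq0 : Tendsto q atTop (nhds 0))
    (hpq0 : Tendsto (fun x => p x * q x) atTop (nhds 0))
    (hu0 : Tendsto u atTop (nhds 0))
    (hv0 : Tendsto v atTop (nhds 0))
    (hu₁ : ∀ x : ℝ,
      HasDerivAt u₁ (-(q x * (x * q x - v x * q x + u x * p x))) x)
    (hw : ∀ x : ℝ, HasDerivAt w (-(p x) ^ 2) x)
    (hu₁0 : Tendsto u₁ atTop (nhds 0))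
    (hw0 : Tendsto w atTop (nhds 0)) :
    ∀ s : ℝ,
      u₁ s - u s * v s + w s = -(p s * q s) ∧
      u₁ s - u s * v s + w s = deriv v s := by
  set F : ℝ → ℝ := fun x => u₁ x - u x * v x + w x + p x * q x with hF
  have hF' : ∀ x : ℝ, HasDerivAt F 0 x := by
    intro x
    have h := (((hu₁ x).sub ((hu x).mul (hv x))).add (hw x)).add
      ((hp x).mul (hq x))
    exact h.congr_deriv (by ring)
  have hFconst : ∀ x y : ℝ, F x = F y := by
    intro x y
    have : ∀ z : ℝ, deriv F z = 0 := fun z => (hF' z).deriv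
    have hd : Differentiable ℝ F := fun z => (hF' z).differentiableAt
    exact is_const_of_deriv_eq_zero hd this x y
  have hF0 : Tendsto F atTop (nhds 0) := by
    have : Tendsto F atTop (nhds (0 - 0 * 0 + 0 + 0)) :=
      ((hu₁0.sub (hu0.mul hv0)).add hw0).add hpq0
    simpa using this
  intro s
  have hFs : F s = 0 := by
    have h1 : Tendsto (fun _ : ℝ => F s) atTop (nhds (F s)) := tendsto_const_nhds
    have h2 : Tendsto (fun x : ℝ => F x) atTop (nhds (F s)) := by
      simpa using h1.congr (fun x => hFconst s x)
    exact tendsto_nhds_unique h2 hF0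
  have key : u₁ s - u s * v s + w s = -(p s * q s) := by
    have := hFs
    simp only [hF] at this
    linarith
  exact ⟨key, by rw [key, (hv s).deriv]⟩
end

section
/- Fix s ∈ ℝ, and set h(x) := 6·q(x)q₁(x) + 2·p₂(x)q(x) + 2·p₁(x)q(x)v(x) + 2·p(x)q(x)v₁(x) − 2·q₂(x)q(x)u(x) − 2·q₁(x)q(x)u₁(x) − 2·q(x)²u₂(x) − 2·p(x)² and G(x) := −6·u₁(x) − 2·v₂(x) − 2·v₁(x)v(x) + 2·u₂(x)u(x) + u₁(x)² + 2·w(x). Assume in addition that x ↦ (x−s)·h(x) and x ↦ G(x) are Lebesgue integrable on (s, ∞) and that (x−s)·G(x) → 0 as x → +∞. Then ∫_s^∞ (x−s)·h(x) dx = −∫_s^∞ G(x) dx, i.e. ∫_s^∞ (x−s)·h(x) dx = ∫_s^∞ (6·u₁(x) + 2·v₂(x) + 2·v₁(x)v(x) − 2·u₂(x)u(x) − u₁(x)² − 2·w(x)) dx. -/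
open Filter MeasureTheory Set

/-- For the Tracy–Widom system together with differentiable functions
`q₁, q₂, p₁, p₂, u₁, u₂, v₁, v₂, w` satisfying `u₁' = -q q₁`, `u₂' = -q q₂`,
`v₁' = -q p₁`, `v₂' = -q p₂`, `w' = -p²`, and a fixed `s`, put
`h = 6 q q₁ + 2 p₂ q + 2 p₁ q v + 2 p q v₁ - 2 q₂ q u - 2 q₁ q u₁ - 2 q² u₂ - 2 p²`
and `G = -6 u₁ - 2 v₂ - 2 v₁ v + 2 u₂ u + u₁² + 2 w`. If `(x-s)·h` and `G` are
integrable on `(s,∞)` and `(x-s)·G → 0` at `+∞`, then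
`∫_s^∞ (x-s)·h = -∫_s^∞ G`, i.e.
`∫_s^∞ (x-s)·h = ∫_s^∞ (6 u₁ + 2 v₂ + 2 v₁ v - 2 u₂ u - u₁² - 2 w)`. -/
theorem stmt8 (q p u v q₁ q₂ p₁ p₂ u₁ u₂ v₁ v₂ w : ℝ → ℝ)
    (hq : ∀ x : ℝ, HasDerivAt q (p x - u x * q x) x)
    (hp : ∀ x : ℝ, HasDerivAt p (x * q x - 2 * v x * q x + u x * p x) x)
    (hu : ∀ x : ℝ, HasDerivAt u (-(q x) ^ 2) x)
    (hv : ∀ x : ℝ, HasDerivAt v (-(p x * q x)) x)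
    (hq0 : Tendsto q atTop (nhds 0))
    (hpq0 : Tendsto (fun x => p x * q x) atTop (nhds 0))
    (hu0 : Tendsto u atTop (nhds 0))
    (hv0 : Tendsto v atTop (nhds 0))
    (hq₁d : Differentiable ℝ q₁) (hq₂d : Differentiable ℝ q₂)
    (hp₁d : Differentiable ℝ p₁) (hp₂d : Differentiable ℝ p₂)
    (hu₁ : ∀ x : ℝ, HasDerivAt u₁ (-(q x * q₁ x)) x)
    (hu₂ : ∀ x : ℝ, HasDerivAt u₂ (-(q x * q₂ x)) x)
    (hv₁ : ∀ x : ℝ, HasDerivAt v₁ (-(q x * p₁ x)) x)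
    (hv₂ : ∀ x : ℝ, HasDerivAt v₂ (-(q x * p₂ x)) x)
    (hw : ∀ x : ℝ, HasDerivAt w (-(p x) ^ 2) x)
    (s : ℝ)
    (hinth : IntegrableOn
      (fun x => (x - s) * (6 * q x * q₁ x + 2 * p₂ x * q x + 2 * p₁ x * q x * v x
        + 2 * p x * q x * v₁ x - 2 * q₂ x * q x * u x - 2 * q₁ x * q x * u₁ x
        - 2 * (q x) ^ 2 * u₂ x - 2 * (p x) ^ 2)) (Ioi s))
    (hintG : IntegrableOn
      (fun x => -6 * u₁ x - 2 * v₂ x - 2 * v₁ x * v x + 2 * u₂ x * u x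
        + (u₁ x) ^ 2 + 2 * w x) (Ioi s))
    (hlimG : Tendsto
      (fun x => (x - s) * (-6 * u₁ x - 2 * v₂ x - 2 * v₁ x * v x + 2 * u₂ x * u x
        + (u₁ x) ^ 2 + 2 * w x)) atTop (nhds 0)) :
    (∫ x in Ioi s, (x - s) * (6 * q x * q₁ x + 2 * p₂ x * q x + 2 * p₁ x * q x * v x
        + 2 * p x * q x * v₁ x - 2 * q₂ x * q x * u x - 2 * q₁ x * q x * u₁ x
        - 2 * (q x) ^ 2 * u₂ x - 2 * (p x) ^ 2))
      = -(∫ x in Ioi s, (-6 * u₁ x - 2 * v₂ x - 2 * v₁ x * v x + 2 * u₂ x * u x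
          + (u₁ x) ^ 2 + 2 * w x)) ∧
    (∫ x in Ioi s, (x - s) * (6 * q x * q₁ x + 2 * p₂ x * q x + 2 * p₁ x * q x * v x
        + 2 * p x * q x * v₁ x - 2 * q₂ x * q x * u x - 2 * q₁ x * q x * u₁ x
        - 2 * (q x) ^ 2 * u₂ x - 2 * (p x) ^ 2))
      = ∫ x in Ioi s, (6 * u₁ x + 2 * v₂ x + 2 * v₁ x * v x - 2 * u₂ x * u x
          - (u₁ x) ^ 2 - 2 * w x) := by

  set h : ℝ → ℝ := fun x => 6 * q x * q₁ x + 2 * p₂ x * q x + 2 * p₁ x * q x * v x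
        + 2 * p x * q x * v₁ x - 2 * q₂ x * q x * u x - 2 * q₁ x * q x * u₁ x
        - 2 * (q x) ^ 2 * u₂ x - 2 * (p x) ^ 2 with hh
  set G : ℝ → ℝ := fun x => -6 * u₁ x - 2 * v₂ x - 2 * v₁ x * v x + 2 * u₂ x * u x
        + (u₁ x) ^ 2 + 2 * w x with hG
  have hGderiv : ∀ x : ℝ, HasDerivAt G (h x) x := by
    intro x
    have hpow : HasDerivAt (fun y => u₁ y ^ 2) (2 * u₁ x * (-(q x * q₁ x))) x := by
      simpa using (hu₁ x).fun_pow 2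
    have hfun : G = fun y => -6 * u₁ y - 2 * v₂ y - 2 * (v₁ y * v y) + 2 * (u₂ y * u y)
        + u₁ y ^ 2 + 2 * w y := by
      funext y; rw [hG]; ring
    have : HasDerivAt (fun y => -6 * u₁ y - 2 * v₂ y - 2 * (v₁ y * v y) + 2 * (u₂ y * u y)
        + u₁ y ^ 2 + 2 * w y) ((-6) * (-(q x * q₁ x)) - 2 * (-(q x * p₂ x))
        - 2 * ((-(q x * p₁ x)) * v x + v₁ x * (-(p x * q x)))
        + 2 * ((-(q x * q₂ x)) * u x + u₂ x * (-(q x) ^ 2))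
        + 2 * u₁ x * (-(q x * q₁ x)) + 2 * (-(p x) ^ 2)) x := by
      exact ((((((hu₁ x).const_mul (-6)).sub ((hv₂ x).const_mul 2)).sub
        (((hv₁ x).mul (hv x)).const_mul 2)).add
        (((hu₂ x).mul (hu x)).const_mul 2)).add hpow).add
        ((hw x).const_mul 2)
    rw [hfun]
    convert this using 1
    simp only [hh]; ring
  have hFderiv : ∀ x ∈ Ici s, HasDerivAt (fun x => (x - s) * G x) (G x + (x - s) * h x) x := by
    intro x _
    have h1 : HasDerivAt (fun x : ℝ => x - s) 1 x := (hasDerivAt_id x).sub_const s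
    have : HasDerivAt (fun x => (x - s) * G x) (1 * G x + (x - s) * h x) x := h1.fun_mul (hGderiv x)
    convert this using 1
    ring
  have hint : IntegrableOn (fun x => G x + (x - s) * h x) (Ioi s) := hintG.add hinth
  have key : ∫ x in Ioi s, (G x + (x - s) * h x) = 0 := by
    have := integral_Ioi_of_hasDerivAt_of_tendsto' hFderiv hint hlimG
    simpa using this
  have hsum : (∫ x in Ioi s, G x) + ∫ x in Ioi s, (x - s) * h x = 0 := by
    rw [← integral_add hintG hinth]; exact key
  have main : (∫ x in Ioi s, (x - s) * h x) = -∫ x in Ioi s, G x := by linarith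
  refine ⟨main, ?_⟩
  rw [main, ← integral_neg]
  exact integral_congr_ae (Filter.Eventually.of_forall fun x => by simp only [hG]; ring)
end

section
/- Fix s ∈ ℝ and a real constant c. Define a(x) := 2c·(p(x)q(x) − u(x)q(x)²) and b(x) := (20c²+3)·q(x)q₁(x) + 2·p₂(x)q(x) + (−60c²+3)·q(x)²v(x) + 2·p₁(x)q(x)v(x) + 2·p(x)q(x)v₁(x) − 2·q₂(x)q(x)u(x) − 2·q₁(x)q(x)u₁(x) − 2·q(x)²u₂(x) + (−60c²+3)·p(x)q(x)u(x) + 60c²·q(x)²u(x)² + (20c²−5)·p(x)². Assume in addition that q₁(x) = x·q(x) − v(x)q(x) + u(x)p(x) for all x, that the functions x ↦ (x−s)·a(x), x ↦ (x−s)·b(x), x ↦ q(x)², x ↦ p(x)q(x), x ↦ p(x)q(x) − u(x)q(x)² and x ↦ −6·u₁(x) − 2·v₂(x) − 2·v₁(x)v(x) + 2·u₂(x)u(x) + u₁(x)² + 2·w(x) are Lebesgue integrable on (s, ∞), and that (x−s)·q(x)² → 0, (x−s)·p(x)q(x) → 0, (x−s)·(p(x)q(x) − u(x)q(x)²) → 0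 and (x−s)·(−6·u₁(x) − 2·v₂(x) − 2·v₁(x)v(x) + 2·u₂(x)u(x) + u₁(x)² + 2·w(x)) → 0 as x → +∞. Then 10·(∫_s^∞ (x−s)·a(x) dx)² − ∫_s^∞ (x−s)·b(x) dx = (20c² − 3)·v(s) + ∫_s^∞ (−6·u₁(x) − 2·v₂(x) − 2·v₁(x)v(x) + 2·u₂(x)u(x) + u₁(x)² + 2·w(x)) dx. -/
open Filter MeasureTheory Set

/-- For the Tracy–Widom system together with differentiable functions
`q₁, q₂, p₁, p₂, u₁, u₂, v₁, v₂, w` satisfying `u₁' = -q q₁`, `u₂' = -q q₂`,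
`v₁' = -q p₁`, `v₂' = -q p₂`, `w' = -p²`, a fixed `s` and constant `c`, with
`a = 2c(pq - u q²)` and
`b = (20c²+3) q q₁ + 2 p₂ q + (-60c²+3) q² v + 2 p₁ q v + 2 p q v₁ - 2 q₂ q u
  - 2 q₁ q u₁ - 2 q² u₂ + (-60c²+3) p q u + 60c² q² u² + (20c²-5) p²`,
assuming `q₁ = x q - v q + u p`, the stated integrability, and the stated decay
at `+∞`, one has
`10 (∫_s^∞ (x-s) a)² - ∫_s^∞ (x-s) b
  = (20c² - 3) v(s) + ∫_s^∞ (-6 u₁ - 2 v₂ - 2 v₁ v + 2 u₂ u + u₁² + 2 w)`. -/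
theorem stmt9 (q p u v q₁ q₂ p₁ p₂ u₁ u₂ v₁ v₂ w : ℝ → ℝ)
    (hq : ∀ x : ℝ, HasDerivAt q (p x - u x * q x) x)
    (hp : ∀ x : ℝ, HasDerivAt p (x * q x - 2 * v x * q x + u x * p x) x)
    (hu : ∀ x : ℝ, HasDerivAt u (-(q x) ^ 2) x)
    (hv : ∀ x : ℝ, HasDerivAt v (-(p x * q x)) x)
    (hq0 : Tendsto q atTop (nhds 0))
    (hpq0 : Tendsto (fun x => p x * q x) atTop (nhds 0))
    (hu0 : Tendsto u atTop (nhds 0))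
    (hv0 : Tendsto v atTop (nhds 0))
    (hq₁d : Differentiable ℝ q₁) (hq₂d : Differentiable ℝ q₂)
    (hp₁d : Differentiable ℝ p₁) (hp₂d : Differentiable ℝ p₂)
    (hu₁ : ∀ x : ℝ, HasDerivAt u₁ (-(q x * q₁ x)) x)
    (hu₂ : ∀ x : ℝ, HasDerivAt u₂ (-(q x * q₂ x)) x)
    (hv₁ : ∀ x : ℝ, HasDerivAt v₁ (-(q x * p₁ x)) x)
    (hv₂ : ∀ x : ℝ, HasDerivAt v₂ (-(q x * p₂ x)) x)
    (hw : ∀ x : ℝ, HasDerivAt w (-(p x) ^ 2) x)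
    (s c : ℝ)
    (hq₁ : ∀ x : ℝ, q₁ x = x * q x - v x * q x + u x * p x)
    (hinta : IntegrableOn
      (fun x => (x - s) * (2 * c * (p x * q x - u x * (q x) ^ 2))) (Ioi s))
    (hintb : IntegrableOn
      (fun x => (x - s) * ((20 * c ^ 2 + 3) * q x * q₁ x + 2 * p₂ x * q x
        + (-60 * c ^ 2 + 3) * (q x) ^ 2 * v x + 2 * p₁ x * q x * v x
        + 2 * p x * q x * v₁ x - 2 * q₂ x * q x * u x - 2 * q₁ x * q x * u₁ x
        - 2 * (q x) ^ 2 * u₂ x + (-60 * c ^ 2 + 3) * p x * q x * u x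
        + 60 * c ^ 2 * (q x) ^ 2 * (u x) ^ 2 + (20 * c ^ 2 - 5) * (p x) ^ 2))
      (Ioi s))
    (hintq2 : IntegrableOn (fun x => (q x) ^ 2) (Ioi s))
    (hintpq : IntegrableOn (fun x => p x * q x) (Ioi s))
    (hintpquq : IntegrableOn (fun x => p x * q x - u x * (q x) ^ 2) (Ioi s))
    (hintG : IntegrableOn
      (fun x => -6 * u₁ x - 2 * v₂ x - 2 * v₁ x * v x + 2 * u₂ x * u x
        + (u₁ x) ^ 2 + 2 * w x) (Ioi s))
    (hlimq2 : Tendsto (fun x => (x - s) * (q x) ^ 2) atTop (nhds 0))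
    (hlimpq : Tendsto (fun x => (x - s) * (p x * q x)) atTop (nhds 0))
    (hlimpquq : Tendsto (fun x => (x - s) * (p x * q x - u x * (q x) ^ 2))
      atTop (nhds 0))
    (hlimG : Tendsto
      (fun x => (x - s) * (-6 * u₁ x - 2 * v₂ x - 2 * v₁ x * v x + 2 * u₂ x * u x
        + (u₁ x) ^ 2 + 2 * w x)) atTop (nhds 0)) :
    10 * (∫ x in Ioi s, (x - s) * (2 * c * (p x * q x - u x * (q x) ^ 2))) ^ 2
      - (∫ x in Ioi s, (x - s) * ((20 * c ^ 2 + 3) * q x * q₁ x + 2 * p₂ x * q x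
          + (-60 * c ^ 2 + 3) * (q x) ^ 2 * v x + 2 * p₁ x * q x * v x
          + 2 * p x * q x * v₁ x - 2 * q₂ x * q x * u x - 2 * q₁ x * q x * u₁ x
          - 2 * (q x) ^ 2 * u₂ x + (-60 * c ^ 2 + 3) * p x * q x * u x
          + 60 * c ^ 2 * (q x) ^ 2 * (u x) ^ 2 + (20 * c ^ 2 - 5) * (p x) ^ 2))
      = (20 * c ^ 2 - 3) * v s
        + ∫ x in Ioi s, (-6 * u₁ x - 2 * v₂ x - 2 * v₁ x * v x + 2 * u₂ x * u x
            + (u₁ x) ^ 2 + 2 * w x) := by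
  classical
  -- First integral of the system: v = (u² - q²)/2
  have hvid : ∀ x : ℝ, v x = ((u x) ^ 2 - (q x) ^ 2) / 2 := by
    have hφd : ∀ x : ℝ,
        HasDerivAt (fun y => v y - (u y) ^ 2 / 2 + (q y) ^ 2 / 2) 0 x := by
      intro x
      have h := ((hv x).sub (((hu x).pow 2).div_const 2)).add
        (((hq x).pow 2).div_const 2)
      exact h.congr_deriv (by ring)
    have hconst : ∀ x y : ℝ,
        (fun y => v y - (u y) ^ 2 / 2 + (q y) ^ 2 / 2) x
          = (fun y => v y - (u y) ^ 2 / 2 + (q y) ^ 2 / 2) y :=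
      is_const_of_deriv_eq_zero (fun x => (hφd x).differentiableAt)
        (fun x => (hφd x).deriv)
    have hφ0 : Tendsto (fun y => v y - (u y) ^ 2 / 2 + (q y) ^ 2 / 2) atTop
        (nhds 0) := by
      have h := ((hv0.sub (((hu0.pow 2)).div_const 2)).add
        (((hq0.pow 2)).div_const 2))
      simpa using h
    have hφc : Tendsto (fun y => v y - (u y) ^ 2 / 2 + (q y) ^ 2 / 2) atTop
        (nhds (v 0 - (u 0) ^ 2 / 2 + (q 0) ^ 2 / 2)) := by
      have : (fun y => v y - (u y) ^ 2 / 2 + (q y) ^ 2 / 2)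
          = fun _ => v 0 - (u 0) ^ 2 / 2 + (q 0) ^ 2 / 2 := by
        funext y; exact hconst y 0
      rw [this]; exact tendsto_const_nhds
    have h0 : v 0 - (u 0) ^ 2 / 2 + (q 0) ^ 2 / 2 = 0 :=
      tendsto_nhds_unique hφc hφ0
    intro x
    have := hconst x 0
    simp only at this
    linarith [this]
  -- ∫ q² = u s
  have Iq2 : (∫ x in Ioi s, (q x) ^ 2) = u s := by
    have h := integral_Ioi_of_hasDerivAt_of_tendsto'
      (f := fun x => -u x) (f' := fun x => (q x) ^ 2) (a := s) (m := 0)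
      (fun x _ => by have := (hu x).neg; simp only [neg_neg] at this; exact this) hintq2 (by simpa using hu0.neg)
    simpa using h
  -- ∫ (x-s) a = -c u s
  have Ia : (∫ x in Ioi s, (x - s) * (2 * c * (p x * q x - u x * (q x) ^ 2)))
      = -c * u s := by
    have hFd : ∀ x ∈ Ici s, HasDerivAt (fun y => c * ((y - s) * (q y) ^ 2))
        (c * (q x) ^ 2 + (x - s) * (2 * c * (p x * q x - u x * (q x) ^ 2))) x := by
      intro x _
      have hx : HasDerivAt (fun y : ℝ => y - s) 1 x := (hasDerivAt_id x).sub_const s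
      have h := (hx.mul ((hq x).pow 2)).const_mul c
      exact h.congr_deriv (by simp only [Pi.pow_apply]; ring)
    have hFint : IntegrableOn
        (fun x => c * (q x) ^ 2 + (x - s) * (2 * c * (p x * q x - u x * (q x) ^ 2)))
        (Ioi s) := (hintq2.const_mul c).add hinta
    have hFt : Tendsto (fun y => c * ((y - s) * (q y) ^ 2)) atTop (nhds 0) := by
      simpa using hlimq2.const_mul c
    have h := integral_Ioi_of_hasDerivAt_of_tendsto' hFd hFint hFt
    have hsplit : (∫ x in Ioi s,
          (c * (q x) ^ 2 + (x - s) * (2 * c * (p x * q x - u x * (q x) ^ 2))))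
        = (∫ x in Ioi s, c * (q x) ^ 2)
          + ∫ x in Ioi s, (x - s) * (2 * c * (p x * q x - u x * (q x) ^ 2)) :=
      integral_add (hintq2.const_mul c) hinta
    have hcq : (∫ x in Ioi s, c * (q x) ^ 2) = c * u s := by
      rw [MeasureTheory.integral_const_mul, Iq2]
    rw [hsplit, hcq] at h
    simp only [sub_self, zero_mul, mul_zero, zero_sub] at h
    linarith [h]
  -- the auxiliary combination H' and its integral
  have hH'int : IntegrableOn
      (fun x => 3 * (p x * q x) - 20 * c ^ 2 * (p x * q x - u x * (q x) ^ 2))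
      (Ioi s) := by
    have h := (hintpq.const_mul (3 : ℝ)).sub (hintpquq.const_mul (20 * c ^ 2))
    exact h
  have IH' : (∫ x in Ioi s,
        (3 * (p x * q x) - 20 * c ^ 2 * (p x * q x - u x * (q x) ^ 2)))
      = -((20 * c ^ 2 - 3) * v s - 10 * c ^ 2 * (u s) ^ 2) := by
    have hHd : ∀ x ∈ Ici s, HasDerivAt
        (fun y => (20 * c ^ 2 - 3) * v y - 10 * c ^ 2 * (u y) ^ 2)
        (3 * (p x * q x) - 20 * c ^ 2 * (p x * q x - u x * (q x) ^ 2)) x := by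
      intro x _
      have h := ((hv x).const_mul (20 * c ^ 2 - 3)).sub
        (((hu x).pow 2).const_mul (10 * c ^ 2))
      exact h.congr_deriv (by ring)
    have hHt : Tendsto (fun y => (20 * c ^ 2 - 3) * v y - 10 * c ^ 2 * (u y) ^ 2)
        atTop (nhds 0) := by
      have h := (hv0.const_mul (20 * c ^ 2 - 3)).sub
        ((hu0.pow 2).const_mul (10 * c ^ 2))
      simpa using h
    have h := integral_Ioi_of_hasDerivAt_of_tendsto' hHd hH'int hHt
    rw [zero_sub] at h
    exact h
  -- derivative of G
  have hGd : ∀ x : ℝ, HasDerivAt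
      (fun y => -6 * u₁ y - 2 * v₂ y - 2 * v₁ y * v y + 2 * u₂ y * u y
        + (u₁ y) ^ 2 + 2 * w y)
      (6 * (q x * q₁ x) + 2 * (q x * p₂ x) + 2 * (q x * p₁ x * v x)
        + 2 * (p x * q x * v₁ x) - 2 * (q x * q₂ x * u x) - 2 * (u₂ x * (q x) ^ 2)
        - 2 * (q x * q₁ x * u₁ x) - 2 * (p x) ^ 2) x := by
    intro x
    have h := ((((((hu₁ x).const_mul (-6 : ℝ)).sub ((hv₂ x).const_mul 2)).sub
      (((hv₁ x).mul (hv x)).const_mul 2)).add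
      (((hu₂ x).mul (hu x)).const_mul 2)).add ((hu₁ x).pow 2)).add
      ((hw x).const_mul 2)
    have hfun : (fun y => -6 * u₁ y - 2 * v₂ y - 2 * v₁ y * v y + 2 * u₂ y * u y
        + (u₁ y) ^ 2 + 2 * w y)
        = fun y => -6 * u₁ y - 2 * v₂ y - 2 * (v₁ y * v y) + 2 * (u₂ y * u y)
          + (u₁ y) ^ 2 + 2 * w y := by
      funext y; ring
    rw [hfun]
    exact h.congr_deriv (by ring)
  -- derivative of H'
  have hH'd : ∀ x : ℝ, HasDerivAt
      (fun y => 3 * (p y * q y) - 20 * c ^ 2 * (p y * q y - u y * (q y) ^ 2))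
      (3 * ((x * q x - 2 * v x * q x + u x * p x) * q x + p x * (p x - u x * q x))
        - 20 * c ^ 2 * (((x * q x - 2 * v x * q x + u x * p x) * q x
            + p x * (p x - u x * q x))
          - (-(q x) ^ 2 * (q x) ^ 2 + u x * (2 * q x ^ 1 * (p x - u x * q x))))) x := by
    intro x
    have hpq := (hp x).mul (hq x)
    have huq2 := (hu x).mul ((hq x).pow 2)
    exact (hpq.const_mul 3).sub ((hpq.sub huq2).const_mul (20 * c ^ 2))
  -- FTC for K = (x-s)(G - H')
  have hKd : ∀ x ∈ Ici s, HasDerivAt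
      (fun y => (y - s) * ((-6 * u₁ y - 2 * v₂ y - 2 * v₁ y * v y + 2 * u₂ y * u y
          + (u₁ y) ^ 2 + 2 * w y)
        - (3 * (p y * q y) - 20 * c ^ 2 * (p y * q y - u y * (q y) ^ 2))))
      ((-6 * u₁ x - 2 * v₂ x - 2 * v₁ x * v x + 2 * u₂ x * u x
          + (u₁ x) ^ 2 + 2 * w x
        - (3 * (p x * q x) - 20 * c ^ 2 * (p x * q x - u x * (q x) ^ 2)))
        + (x - s) * ((20 * c ^ 2 + 3) * q x * q₁ x + 2 * p₂ x * q x
          + (-60 * c ^ 2 + 3) * (q x) ^ 2 * v x + 2 * p₁ x * q x * v x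
          + 2 * p x * q x * v₁ x - 2 * q₂ x * q x * u x - 2 * q₁ x * q x * u₁ x
          - 2 * (q x) ^ 2 * u₂ x + (-60 * c ^ 2 + 3) * p x * q x * u x
          + 60 * c ^ 2 * (q x) ^ 2 * (u x) ^ 2 + (20 * c ^ 2 - 5) * (p x) ^ 2)) x := by
    intro x _
    have hx : HasDerivAt (fun y : ℝ => y - s) 1 x := (hasDerivAt_id x).sub_const s
    have h := hx.mul ((hGd x).sub (hH'd x))
    have e1 := hq₁ x
    have e2 := hvid x
    exact h.congr_deriv (by
      simp only [Pi.sub_apply]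
      linear_combination (-1 : ℝ) * (((x - s) * (20 * c ^ 2 - 3) * q x) * e1
        + (-(40 * c ^ 2 * (x - s) * (q x) ^ 2)) * e2))
  have hKint : IntegrableOn
      (fun x => (-6 * u₁ x - 2 * v₂ x - 2 * v₁ x * v x + 2 * u₂ x * u x
          + (u₁ x) ^ 2 + 2 * w x
        - (3 * (p x * q x) - 20 * c ^ 2 * (p x * q x - u x * (q x) ^ 2)))
        + (x - s) * ((20 * c ^ 2 + 3) * q x * q₁ x + 2 * p₂ x * q x
          + (-60 * c ^ 2 + 3) * (q x) ^ 2 * v x + 2 * p₁ x * q x * v x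
          + 2 * p x * q x * v₁ x - 2 * q₂ x * q x * u x - 2 * q₁ x * q x * u₁ x
          - 2 * (q x) ^ 2 * u₂ x + (-60 * c ^ 2 + 3) * p x * q x * u x
          + 60 * c ^ 2 * (q x) ^ 2 * (u x) ^ 2 + (20 * c ^ 2 - 5) * (p x) ^ 2))
      (Ioi s) := (hintG.sub hH'int).add hintb
  have hKt : Tendsto
      (fun y => (y - s) * ((-6 * u₁ y - 2 * v₂ y - 2 * v₁ y * v y + 2 * u₂ y * u y
          + (u₁ y) ^ 2 + 2 * w y)
        - (3 * (p y * q y) - 20 * c ^ 2 * (p y * q y - u y * (q y) ^ 2))))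
      atTop (nhds 0) := by
    have h := hlimG.sub ((hlimpq.const_mul (3 : ℝ)).sub
      (hlimpquq.const_mul (20 * c ^ 2)))
    have hfun : (fun y => (y - s) * ((-6 * u₁ y - 2 * v₂ y - 2 * v₁ y * v y
          + 2 * u₂ y * u y + (u₁ y) ^ 2 + 2 * w y)
        - (3 * (p y * q y) - 20 * c ^ 2 * (p y * q y - u y * (q y) ^ 2))))
        = fun y => (y - s) * (-6 * u₁ y - 2 * v₂ y - 2 * v₁ y * v y
            + 2 * u₂ y * u y + (u₁ y) ^ 2 + 2 * w y)
          - (3 * ((y - s) * (p y * q y))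
            - 20 * c ^ 2 * ((y - s) * (p y * q y - u y * (q y) ^ 2))) := by
      funext y; ring
    rw [hfun, show (0 : ℝ) = 0 - (3 * 0 - 20 * c ^ 2 * 0) by ring]
    exact h
  have hK := integral_Ioi_of_hasDerivAt_of_tendsto' hKd hKint hKt
  have hKs : (s - s) * ((-6 * u₁ s - 2 * v₂ s - 2 * v₁ s * v s + 2 * u₂ s * u s
          + (u₁ s) ^ 2 + 2 * w s)
        - (3 * (p s * q s) - 20 * c ^ 2 * (p s * q s - u s * (q s) ^ 2))) = 0 := by
    simp
  have hsplit : (∫ x in Ioi s,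
        ((-6 * u₁ x - 2 * v₂ x - 2 * v₁ x * v x + 2 * u₂ x * u x
          + (u₁ x) ^ 2 + 2 * w x
        - (3 * (p x * q x) - 20 * c ^ 2 * (p x * q x - u x * (q x) ^ 2)))
        + (x - s) * ((20 * c ^ 2 + 3) * q x * q₁ x + 2 * p₂ x * q x
          + (-60 * c ^ 2 + 3) * (q x) ^ 2 * v x + 2 * p₁ x * q x * v x
          + 2 * p x * q x * v₁ x - 2 * q₂ x * q x * u x - 2 * q₁ x * q x * u₁ x
          - 2 * (q x) ^ 2 * u₂ x + (-60 * c ^ 2 + 3) * p x * q x * u x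
          + 60 * c ^ 2 * (q x) ^ 2 * (u x) ^ 2 + (20 * c ^ 2 - 5) * (p x) ^ 2)))
      = ((∫ x in Ioi s, (-6 * u₁ x - 2 * v₂ x - 2 * v₁ x * v x + 2 * u₂ x * u x
            + (u₁ x) ^ 2 + 2 * w x))
          - ∫ x in Ioi s,
            (3 * (p x * q x) - 20 * c ^ 2 * (p x * q x - u x * (q x) ^ 2)))
        + ∫ x in Ioi s, (x - s) * ((20 * c ^ 2 + 3) * q x * q₁ x + 2 * p₂ x * q x
          + (-60 * c ^ 2 + 3) * (q x) ^ 2 * v x + 2 * p₁ x * q x * v x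
          + 2 * p x * q x * v₁ x - 2 * q₂ x * q x * u x - 2 * q₁ x * q x * u₁ x
          - 2 * (q x) ^ 2 * u₂ x + (-60 * c ^ 2 + 3) * p x * q x * u x
          + 60 * c ^ 2 * (q x) ^ 2 * (u x) ^ 2 + (20 * c ^ 2 - 5) * (p x) ^ 2) := by
    have h1 : (∫ x in Ioi s,
          ((-6 * u₁ x - 2 * v₂ x - 2 * v₁ x * v x + 2 * u₂ x * u x
            + (u₁ x) ^ 2 + 2 * w x)
          - (3 * (p x * q x) - 20 * c ^ 2 * (p x * q x - u x * (q x) ^ 2))))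
        = (∫ x in Ioi s, (-6 * u₁ x - 2 * v₂ x - 2 * v₁ x * v x + 2 * u₂ x * u x
            + (u₁ x) ^ 2 + 2 * w x))
          - ∫ x in Ioi s,
            (3 * (p x * q x) - 20 * c ^ 2 * (p x * q x - u x * (q x) ^ 2)) :=
      integral_sub hintG hH'int
    have h2 : (∫ x in Ioi s,
        ((-6 * u₁ x - 2 * v₂ x - 2 * v₁ x * v x + 2 * u₂ x * u x
          + (u₁ x) ^ 2 + 2 * w x
        - (3 * (p x * q x) - 20 * c ^ 2 * (p x * q x - u x * (q x) ^ 2)))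
        + (x - s) * ((20 * c ^ 2 + 3) * q x * q₁ x + 2 * p₂ x * q x
          + (-60 * c ^ 2 + 3) * (q x) ^ 2 * v x + 2 * p₁ x * q x * v x
          + 2 * p x * q x * v₁ x - 2 * q₂ x * q x * u x - 2 * q₁ x * q x * u₁ x
          - 2 * (q x) ^ 2 * u₂ x + (-60 * c ^ 2 + 3) * p x * q x * u x
          + 60 * c ^ 2 * (q x) ^ 2 * (u x) ^ 2 + (20 * c ^ 2 - 5) * (p x) ^ 2)))
      = (∫ x in Ioi s,
          ((-6 * u₁ x - 2 * v₂ x - 2 * v₁ x * v x + 2 * u₂ x * u x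
            + (u₁ x) ^ 2 + 2 * w x)
          - (3 * (p x * q x) - 20 * c ^ 2 * (p x * q x - u x * (q x) ^ 2))))
        + ∫ x in Ioi s, (x - s) * ((20 * c ^ 2 + 3) * q x * q₁ x + 2 * p₂ x * q x
          + (-60 * c ^ 2 + 3) * (q x) ^ 2 * v x + 2 * p₁ x * q x * v x
          + 2 * p x * q x * v₁ x - 2 * q₂ x * q x * u x - 2 * q₁ x * q x * u₁ x
          - 2 * (q x) ^ 2 * u₂ x + (-60 * c ^ 2 + 3) * p x * q x * u x
          + 60 * c ^ 2 * (q x) ^ 2 * (u x) ^ 2 + (20 * c ^ 2 - 5) * (p x) ^ 2) :=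
      integral_add (hintG.sub hH'int) hintb
    rw [h2, h1]
  rw [hsplit, hKs, IH'] at hK
  rw [Ia]
  linarith [hK]
end
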